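/- Let c₂ range over {1, CX₁₂}, c₃ over {1, CX₂₁, CX₁₂·CX₂₁}, and c₄ over {X₁^a·X₂^b : a,b ∈ {0,1}}. Then the map (c₄, c₃, c₂) ↦ c₄·c₃·c₂ is injective and its image is exactly the subgroup C of U(8,ℂ) generated by {X₁, CX₁₂, CX₂₁}; in particular C has exactly 24 elements. -/

import Mathlib

noncomputable section
open Matrix Complex

abbrev M8 := Matrix (Fin 8) (Fin 8) ℂ
abbrev U8 := Matrix.unitaryGroup (Fin 8) ℂ

namespace CCS

/-- qubit 0 (most significant bit) of a basis index. -/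
def b0 (m : Fin 8) : ℕ := m.val / 4
def b1 (m : Fin 8) : ℕ := m.val / 2 % 2
def b2 (m : Fin 8) : ℕ := m.val % 2

/-- basis index with qubit values `a`, `b`, `c` (mod 2). -/
def idx (a b c : ℕ) : Fin 8 := ⟨4 * (a % 2) + 2 * (b % 2) + c % 2, by omega⟩

/-- the permutation matrix sending `e_s` to `e_{σ s}`. -/
def permMat (σ : Fin 8 → Fin 8) : M8 := fun r s => if r = σ s then 1 else 0

def q0 (m : Fin 8) : Fin 2 := ⟨b0 m, by simp [b0]; omega⟩
def q1 (m : Fin 8) : Fin 2 := ⟨b1 m, by simp [b1]; omega⟩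
def q2 (m : Fin 8) : Fin 2 := ⟨b2 m, by simp [b2]; omega⟩

def Kmat : Matrix (Fin 2) (Fin 2) ℂ := (1 / (1 + I)) • !![1, 1; 1, -1]
def Smat : Matrix (Fin 2) (Fin 2) ℂ := !![1, 0; 0, I]

/-- `A ⊗ I₂ ⊗ I₂` -/
def K0 : M8 := fun r s => Kmat (q0 r) (q0 s) * (if q1 r = q1 s ∧ q2 r = q2 s then 1 else 0)
def K1 : M8 := fun r s => Kmat (q1 r) (q1 s) * (if q0 r = q0 s ∧ q2 r = q2 s then 1 else 0)
def K2 : M8 := fun r s => Kmat (q2 r) (q2 s) * (if q0 r = q0 s ∧ q1 r = q1 s then 1 else 0)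

def omega8 : M8 := Matrix.diagonal fun _ => I
def S0 : M8 := Matrix.diagonal fun m => I ^ b0 m
def S1 : M8 := Matrix.diagonal fun m => I ^ b1 m
def S2 : M8 := Matrix.diagonal fun m => I ^ b2 m
def CS01 : M8 := Matrix.diagonal fun m => I ^ (b0 m * b1 m)
def CS12 : M8 := Matrix.diagonal fun m => I ^ (b1 m * b2 m)
def CS02 : M8 := Matrix.diagonal fun m => I ^ (b0 m * b2 m)
def CCZ : M8 := Matrix.diagonal fun m => (-1 : ℂ) ^ (b0 m * b1 m * b2 m)

def X0 : M8 := permMat fun m => idx (b0 m + 1) (b1 m) (b2 m)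
def X1 : M8 := permMat fun m => idx (b0 m) (b1 m + 1) (b2 m)
def X2 : M8 := permMat fun m => idx (b0 m) (b1 m) (b2 m + 1)
def CX01 : M8 := permMat fun m => idx (b0 m) (b1 m + b0 m) (b2 m)
def CX10 : M8 := permMat fun m => idx (b0 m + b1 m) (b1 m) (b2 m)
def CX12 : M8 := permMat fun m => idx (b0 m) (b1 m) (b2 m + b1 m)
def CX21 : M8 := permMat fun m => idx (b0 m) (b1 m + b2 m) (b2 m)
def CX02 : M8 := permMat fun m => idx (b0 m) (b1 m) (b2 m + b0 m)
def CX20 : M8 := permMat fun m => idx (b0 m + b2 m) (b1 m) (b2 m)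
def CCX0 : M8 := permMat fun m => idx (b0 m + b1 m * b2 m) (b1 m) (b2 m)
def Swap01 : M8 := permMat fun m => idx (b1 m) (b0 m) (b2 m)
def Swap12 : M8 := permMat fun m => idx (b0 m) (b2 m) (b1 m)

/-- The ring ℤ[1/2, i]. -/
def Zhi : Subring ℂ := Subring.closure {1 / 2, I}

/-- The 3-qubit Clifford+CS group, as a subgroup of U(8,ℂ). -/
def CliffordCS3 : Subgroup U8 :=
  Subgroup.closure {u : U8 | (u : M8) ∈ ({omega8, K0, K1, K2, S0, S1, S2, CS01, CS12} : Set M8)}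

end CCS

noncomputable section
open CCS


namespace CNFAux
open CCS

/-! ### Permutation matrix toolbox -/

lemma permMat_mul (σ τ : Fin 8 → Fin 8) : permMat σ * permMat τ = permMat (σ ∘ τ) := by
  ext r s
  simp [permMat, Matrix.mul_apply]

lemma permMat_one : permMat id = 1 := by
  ext r s
  simp [permMat, Matrix.one_apply, eq_comm]

lemma permMat_injective : Function.Injective permMat := by
  intro σ τ h
  funext s
  have h2 : (1 : ℂ) = if σ s = τ s then 1 else 0 := by
    simpa [permMat] using congrFun (congrFun h (σ s)) s
  by_cases hc : σ s = τ s
  · exact hc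
  · rw [if_neg hc] at h2
    exact absurd h2.symm zero_ne_one

lemma star_permMat (f g : Fin 8 → Fin 8) (hfg : f ∘ g = id) (hgf : g ∘ f = id) :
    star (permMat f) = permMat g := by
  ext r s
  simp only [Matrix.star_apply, permMat]
  have h1 : ∀ x, f (g x) = x := fun x => congrFun hfg x
  have h2 : ∀ x, g (f x) = x := fun x => congrFun hgf x
  by_cases h : s = f r
  · rw [if_pos h, if_pos (by rw [h, h2])]; simp
  · rw [if_neg h, if_neg (fun hc => h (by rw [hc, h1]))]; simp

lemma permMat_unitary (f g : Fin 8 → Fin 8) (hfg : f ∘ g = id) (hgf : g ∘ f = id) :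
    permMat f ∈ Matrix.unitaryGroup (Fin 8) ℂ := by
  rw [Matrix.mem_unitaryGroup_iff, star_permMat f g hfg hgf, permMat_mul, hfg, permMat_one]

/-! ### The 24 normal-form permutations -/

def sX1 : Fin 8 → Fin 8 := fun m => idx (b0 m) (b1 m + 1) (b2 m)
def sX2 : Fin 8 → Fin 8 := fun m => idx (b0 m) (b1 m) (b2 m + 1)
def sCX12 : Fin 8 → Fin 8 := fun m => idx (b0 m) (b1 m) (b2 m + b1 m)
def sCX21 : Fin 8 → Fin 8 := fun m => idx (b0 m) (b1 m + b2 m) (b2 m)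

lemma X1_eq : X1 = permMat sX1 := rfl
lemma X2_eq : X2 = permMat sX2 := rfl
lemma CX12_eq : CX12 = permMat sCX12 := rfl
lemma CX21_eq : CX21 = permMat sCX21 := rfl

def c2f : Fin 2 → (Fin 8 → Fin 8) := ![id, sCX12]
def c3f : Fin 3 → (Fin 8 → Fin 8) := ![id, sCX21, sCX12 ∘ sCX21]
def c4f : Fin 2 → Fin 2 → (Fin 8 → Fin 8) := ![![id, sX2], ![sX1, sX1 ∘ sX2]]
def nf (a b : Fin 2) (j : Fin 3) (k : Fin 2) : Fin 8 → Fin 8 := c4f a b ∘ c3f j ∘ c2f k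

set_option maxHeartbeats 2000000 in
lemma Dinj : ∀ a b j k a' b' j' k', nf a b j k = nf a' b' j' k' →
    a = a' ∧ b = b' ∧ j = j' ∧ k = k' := by decide

set_option maxHeartbeats 4000000 in
lemma Dmul : ∀ a b j k a' b' j' k', ∃ a'' b'' j'' k'',
    nf a b j k ∘ nf a' b' j' k' = nf a'' b'' j'' k'' := by decide

set_option maxHeartbeats 2000000 in
lemma Dinv : ∀ a b j k, ∃ a' b' j' k',
    nf a b j k ∘ nf a' b' j' k' = id ∧ nf a' b' j' k' ∘ nf a b j k = id := by decide

lemma DX1 : sX1 = nf 1 0 0 0 := by decide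
lemma DX12 : sCX12 = nf 0 0 0 1 := by decide
lemma DX21 : sCX21 = nf 0 0 1 0 := by decide
lemma Did : nf 0 0 0 0 = id := by decide
lemma invX1 : sX1 ∘ sX1 = id := by decide
lemma invX12 : sCX12 ∘ sCX12 = id := by decide
lemma invX21 : sCX21 ∘ sCX21 = id := by decide
lemma DsX2 : sX1 ∘ sCX12 ∘ sX1 ∘ sCX12 = sX2 := by decide

/-! ### Unitary elements -/

def uX1 : U8 := ⟨X1, permMat_unitary sX1 sX1 invX1 invX1⟩
def uCX12 : U8 := ⟨CX12, permMat_unitary sCX12 sCX12 invX12 invX12⟩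
def uCX21 : U8 := ⟨CX21, permMat_unitary sCX21 sCX21 invX21 invX21⟩
def uX2 : U8 := uX1 * uCX12 * uX1 * uCX12

lemma coe_uX2 : (uX2 : M8) = X2 := by
  show X1 * CX12 * X1 * CX12 = X2
  rw [X1_eq, CX12_eq, X2_eq, permMat_mul, permMat_mul, permMat_mul, ← DsX2]
  rfl

/-! ### Matching the sets in the statement -/

lemma c4_eq (a b : Fin 2) : X1 ^ (a : ℕ) * X2 ^ (b : ℕ) = permMat (c4f a b) := by
  fin_cases a <;> fin_cases b <;>
    simp [c4f, X1_eq, X2_eq, permMat_mul, permMat_one, pow_succ]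

lemma c3_eq (j : Fin 3) :
    permMat (c3f j) ∈ ({1, CX21, CX12 * CX21} : Set M8) := by
  fin_cases j
  · left; exact permMat_one
  · right; left; exact CX21_eq.symm
  · right; right
    rw [CX12_eq, CX21_eq, permMat_mul]
    exact rfl

lemma c2_eq (k : Fin 2) : permMat (c2f k) ∈ ({1, CX12} : Set M8) := by
  fin_cases k
  · left; exact permMat_one
  · right; exact CX12_eq.symm

lemma mem3 {A : M8} (h : A ∈ ({1, CX21, CX12 * CX21} : Set M8)) :
    ∃ j : Fin 3, A = permMat (c3f j) := by
  rcases h with rfl | rfl | rfl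
  · exact ⟨0, permMat_one.symm⟩
  · exact ⟨1, CX21_eq⟩
  · exact ⟨2, by rw [CX12_eq, CX21_eq, permMat_mul]; rfl⟩

lemma mem2 {A : M8} (h : A ∈ ({1, CX12} : Set M8)) :
    ∃ k : Fin 2, A = permMat (c2f k) := by
  rcases h with rfl | rfl
  · exact ⟨0, permMat_one.symm⟩
  · exact ⟨1, CX12_eq⟩

lemma prod_eq (a b : Fin 2) (j : Fin 3) (k : Fin 2) :
    permMat (c4f a b) * permMat (c3f j) * permMat (c2f k) = permMat (nf a b j k) := by
  rw [permMat_mul, permMat_mul]; rfl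

/-! ### The subgroup side -/

abbrev G' : Subgroup U8 :=
  Subgroup.closure {u : U8 | (u : M8) ∈ ({X1, CX12, CX21} : Set M8)}

lemma uX1_mem : uX1 ∈ G' := Subgroup.subset_closure (by left; rfl)
lemma uCX12_mem : uCX12 ∈ G' := Subgroup.subset_closure (by right; left; rfl)
lemma uCX21_mem : uCX21 ∈ G' := Subgroup.subset_closure (by right; right; rfl)
lemma uX2_mem : uX2 ∈ G' :=
  mul_mem (mul_mem (mul_mem uX1_mem uCX12_mem) uX1_mem) uCX12_mem

lemma exists4 (a b : Fin 2) : ∃ u ∈ G', (u : M8) = permMat (c4f a b) := by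
  refine ⟨uX1 ^ (a : ℕ) * uX2 ^ (b : ℕ),
    mul_mem (pow_mem uX1_mem _) (pow_mem uX2_mem _), ?_⟩
  rw [← c4_eq a b]
  push_cast
  rw [coe_uX2]
  rfl

lemma exists3 (j : Fin 3) : ∃ u ∈ G', (u : M8) = permMat (c3f j) := by
  fin_cases j
  · exact ⟨1, one_mem _, permMat_one.symm⟩
  · exact ⟨uCX21, uCX21_mem, rfl⟩
  · refine ⟨uCX12 * uCX21, mul_mem uCX12_mem uCX21_mem, ?_⟩
    show CX12 * CX21 = _
    rw [CX12_eq, CX21_eq, permMat_mul]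
    rfl

lemma exists2 (k : Fin 2) : ∃ u ∈ G', (u : M8) = permMat (c2f k) := by
  fin_cases k
  · exact ⟨1, one_mem _, permMat_one.symm⟩
  · exact ⟨uCX12, uCX12_mem, rfl⟩

/-- The candidate subgroup containing the closure. -/
def H : Subgroup U8 where
  carrier := {u : U8 | ∃ a b j k, (u : M8) = permMat (nf a b j k)}
  one_mem' := ⟨0, 0, 0, 0, by rw [Did, permMat_one]; rfl⟩
  mul_mem' := by
    rintro u v ⟨a, b, j, k, hu⟩ ⟨a', b', j', k', hv⟩
    obtain ⟨a'', b'', j'', k'', h⟩ := Dmul a b j k a' b' j' k'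
    refine ⟨a'', b'', j'', k'', ?_⟩
    show (u : M8) * (v : M8) = _
    rw [hu, hv, permMat_mul, h]
  inv_mem' := by
    rintro u ⟨a, b, j, k, hu⟩
    obtain ⟨a', b', j', k', h1, h2⟩ := Dinv a b j k
    refine ⟨a', b', j', k', ?_⟩
    have hinv : ((u⁻¹ : U8) : M8) = star (u : M8) := by
      rw [← Unitary.star_eq_inv]; rfl
    rw [hinv, hu, star_permMat _ _ h1 h2]

lemma closure_le_H : G' ≤ H := by
  apply Subgroup.closure_le _ |>.mpr
  rintro u hu
  rcases hu with h | h | h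
  · exact ⟨1, 0, 0, 0, by rw [show (u : M8) = X1 from h, X1_eq, DX1]⟩
  · exact ⟨0, 0, 0, 1, by rw [show (u : M8) = CX12 from h, CX12_eq, DX12]⟩
  · exact ⟨0, 0, 1, 0, by rw [show (u : M8) = CX21 from h, CX21_eq, DX21]⟩

end CNFAux

open CNFAux

/-- With `c₂ ∈ {1, CX₁₂}`, `c₃ ∈ {1, CX₂₁, CX₁₂·CX₂₁}`, `c₄ ∈ {X₁^a·X₂^b : a,b ∈ {0,1}}`,
the map `(c₄, c₃, c₂) ↦ c₄·c₃·c₂` is injective and its image is exactly the subgroup `C`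
of U(8,ℂ) generated by `{X₁, CX₁₂, CX₂₁}`; in particular `C` has exactly 24 elements. -/

theorem C_normal_form :
    Set.InjOn (fun t : M8 × M8 × M8 => t.1 * t.2.1 * t.2.2)
      (({X1 ^ (a : ℕ) * X2 ^ (b : ℕ) | (a : Fin 2) (b : Fin 2)} : Set M8) ×ˢ
        (({1, CX21, CX12 * CX21} : Set M8) ×ˢ ({1, CX12} : Set M8))) ∧
    (fun t : M8 × M8 × M8 => t.1 * t.2.1 * t.2.2) ''
        (({X1 ^ (a : ℕ) * X2 ^ (b : ℕ) | (a : Fin 2) (b : Fin 2)} : Set M8) ×ˢ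
          (({1, CX21, CX12 * CX21} : Set M8) ×ˢ ({1, CX12} : Set M8))) =
      (fun u : U8 => (u : M8)) ''
        (Subgroup.closure {u : U8 | (u : M8) ∈ ({X1, CX12, CX21} : Set M8)}) ∧
    Nat.card (Subgroup.closure {u : U8 | (u : M8) ∈ ({X1, CX12, CX21} : Set M8)}) = 24 := by
  have hinj : Set.InjOn (fun t : M8 × M8 × M8 => t.1 * t.2.1 * t.2.2)
      (({X1 ^ (a : ℕ) * X2 ^ (b : ℕ) | (a : Fin 2) (b : Fin 2)} : Set M8) ×ˢ
        (({1, CX21, CX12 * CX21} : Set M8) ×ˢ ({1, CX12} : Set M8))) := by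
    rintro ⟨x4, x3, x2⟩ ⟨hx4, hx3, hx2⟩ ⟨y4, y3, y2⟩ ⟨hy4, hy3, hy2⟩ h
    dsimp only at hx4 hx3 hx2 hy4 hy3 hy2 h ⊢
    obtain ⟨a, b, hab⟩ := hx4
    obtain ⟨a', b', hab'⟩ := hy4
    obtain ⟨j, hj⟩ := mem3 hx3
    obtain ⟨j', hj'⟩ := mem3 hy3
    obtain ⟨k, hk⟩ := mem2 hx2
    obtain ⟨k', hk'⟩ := mem2 hy2
    have hx4' : x4 = permMat (c4f a b) := by rw [← hab, c4_eq]
    have hy4' : y4 = permMat (c4f a' b') := by rw [← hab', c4_eq]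
    rw [hx4', hj, hk, hy4', hj', hk', prod_eq, prod_eq] at h
    obtain ⟨ha, hb, hjj, hkk⟩ := Dinj a b j k a' b' j' k' (permMat_injective h)
    subst ha hb hjj hkk
    rw [hx4', hj, hk, hy4', hj', hk']
  have himg : (fun t : M8 × M8 × M8 => t.1 * t.2.1 * t.2.2) ''
        (({X1 ^ (a : ℕ) * X2 ^ (b : ℕ) | (a : Fin 2) (b : Fin 2)} : Set M8) ×ˢ
          (({1, CX21, CX12 * CX21} : Set M8) ×ˢ ({1, CX12} : Set M8))) =
      (fun u : U8 => (u : M8)) ''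
        (Subgroup.closure {u : U8 | (u : M8) ∈ ({X1, CX12, CX21} : Set M8)}) := by
    ext A
    constructor
    · rintro ⟨⟨x4, x3, x2⟩, ⟨hx4, hx3, hx2⟩, rfl⟩
      dsimp only at hx4 hx3 hx2 ⊢
      obtain ⟨a, b, hab⟩ := hx4
      obtain ⟨j, hj⟩ := mem3 hx3
      obtain ⟨k, hk⟩ := mem2 hx2
      obtain ⟨u4, hu4G, hu4⟩ := exists4 a b
      obtain ⟨u3, hu3G, hu3⟩ := exists3 j
      obtain ⟨u2, hu2G, hu2⟩ := exists2 k
      refine ⟨u4 * u3 * u2, mul_mem (mul_mem hu4G hu3G) hu2G, ?_⟩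
      show ((u4 : M8) * u3 * u2) = x4 * x3 * x2
      rw [hu4, hu3, hu2, ← hab, c4_eq, hj, hk]
      
    · rintro ⟨u, hu, rfl⟩
      obtain ⟨a, b, j, k, hcoe⟩ := closure_le_H hu
      refine ⟨(permMat (c4f a b), permMat (c3f j), permMat (c2f k)),
        ⟨⟨a, b, c4_eq a b⟩, c3_eq j, c2_eq k⟩, ?_⟩
      show permMat (c4f a b) * permMat (c3f j) * permMat (c2f k) = (u : M8)
      rw [prod_eq, hcoe]
  refine ⟨hinj, himg, ?_⟩
  -- cardinality
  have hrange : (fun u : U8 => (u : M8)) ''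
        (Subgroup.closure {u : U8 | (u : M8) ∈ ({X1, CX12, CX21} : Set M8)}) =
      Set.range (fun q : Fin 2 × Fin 2 × Fin 3 × Fin 2 =>
        permMat (nf q.1 q.2.1 q.2.2.1 q.2.2.2)) := by
    ext A
    constructor
    · rintro ⟨u, hu, rfl⟩
      obtain ⟨a, b, j, k, hcoe⟩ := closure_le_H hu
      exact ⟨(a, b, j, k), hcoe.symm⟩
    · rintro ⟨⟨a, b, j, k⟩, rfl⟩
      rw [← himg]
      exact ⟨(permMat (c4f a b), permMat (c3f j), permMat (c2f k)),
        ⟨⟨a, b, c4_eq a b⟩, c3_eq j, c2_eq k⟩, (prod_eq a b j k)⟩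
  have hψinj : Function.Injective (fun q : Fin 2 × Fin 2 × Fin 3 × Fin 2 =>
      permMat (nf q.1 q.2.1 q.2.2.1 q.2.2.2)) := by
    rintro ⟨a, b, j, k⟩ ⟨a', b', j', k'⟩ h
    obtain ⟨ha, hb, hj, hk⟩ := Dinj a b j k a' b' j' k' (permMat_injective h)
    simp [ha, hb, hj, hk]
  have hval : Function.Injective (fun u : U8 => (u : M8)) := Subtype.val_injective
  calc Nat.card (Subgroup.closure {u : U8 | (u : M8) ∈ ({X1, CX12, CX21} : Set M8)})
      = Nat.card ((fun u : U8 => (u : M8)) ''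
          ((Subgroup.closure {u : U8 | (u : M8) ∈ ({X1, CX12, CX21} : Set M8)}) : Set U8)) :=
        (Nat.card_image_of_injective hval _).symm
    _ = Nat.card (Set.range (fun q : Fin 2 × Fin 2 × Fin 3 × Fin 2 =>
          permMat (nf q.1 q.2.1 q.2.2.1 q.2.2.2))) := by rw [hrange]
    _ = Nat.card (Fin 2 × Fin 2 × Fin 3 × Fin 2) := Nat.card_range_of_injective hψinj
    _ = 24 := by simp
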